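/- For the Dirac-type operator D = Σ_{j,μ} (σ^j e_j^μ δ_μ + ½σ^j δ_μ(e_j^μ)) on the noncommutative torus with invertible coefficient matrix (e_j^μ) over J A_θ J*, the one-forms ω_i = U_i* [D, U_i] are central: [a, ω_i] = 0 for all a ∈ A_θ. -/

import Mathlib

/- STATEMENT 8: For the Dirac-type operator
  D = Σ_{j,μ} (σ^j e_j^μ δ_μ + ½ σ^j δ_μ(e_j^μ))
on the noncommutative torus, with coefficients e_j^μ in the commutant J A_θ J*,
the one-forms ω_i = U_i* [D, U_i] are central: [π(a), ω_i] = 0 for all a ∈ A_θ.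

Model: V = (ℤ×ℤ → ℂ) is the GNS space of A_θ with basis ε_{k,l};
the monomial π(U₁^kU₂^l) is the operator `wA θ (k,l)` and a general a ∈ A_θ is
π(a) = Σ α_p wA θ p (finitely many terms).  The spinor space is H = V × V, A_θ
acting diagonally; σ¹,σ²,σ³ act on the ℂ² factor.  δ₁, δ₂ are the diagonal
operators implementing the derivations, δ_μ(T) := [δ_μ, T], and the coefficients
e_j^μ are arbitrary operators commuting with every π(U₁^kU₂^l), i.e. elements of
the commutant of A_θ. -/

noncomputable section
open Complex

abbrev NCV := (ℤ × ℤ) → ℂ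

/-- the operator `π(U₁^k U₂^l)` on the GNS space -/
def wA (θ : ℝ) (p : ℤ × ℤ) : Module.End ℂ NCV where
  toFun f := fun q =>
    Complex.exp (2 * Real.pi * Complex.I * θ * (q.1 - p.1) * p.2) * f (q.1 - p.1, q.2 - p.2)
  map_add' f g := by funext q; simp [mul_add]
  map_smul' c f := by funext q; simp [smul_eq_mul]; ring

/-- the derivations δ₁, δ₂, acting diagonally on the GNS space -/
def ncDer (μ : Fin 2) : Module.End ℂ NCV where
  toFun f := fun q => (if μ = 0 then (q.1 : ℂ) else (q.2 : ℂ)) * f q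
  map_add' f g := by funext q; simp [mul_add]
  map_smul' c f := by funext q; simp [smul_eq_mul]; ring

/-- π(a) for a = Σ α_p U₁^{p₁}U₂^{p₂} ∈ A_θ (finitely supported coefficients) -/
def ncRep (θ : ℝ) (α : (ℤ × ℤ) →₀ ℂ) : Module.End ℂ NCV :=
  α.sum fun p c => c • wA θ p

/-- diagonal lift of an operator on V to the spinor space H = V ⊗ ℂ² = V × V -/
def ncDiag (T : Module.End ℂ NCV) : Module.End ℂ (NCV × NCV) := T.prodMap T

/-- the action of the Pauli matrices σ¹, σ² on H = V × V -/
def ncSigma (j : Fin 2) : Module.End ℂ (NCV × NCV) where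
  toFun x := if j = 0 then (x.2, x.1) else (-(Complex.I • x.2), Complex.I • x.1)
  map_add' x y := by
    rcases x with ⟨x1, x2⟩; rcases y with ⟨y1, y2⟩
    by_cases h : j = 0 <;> simp [h, Prod.add_def, smul_add] <;> abel
  map_smul' c x := by
    by_cases h : j = 0 <;> simp [h, Prod.smul_def, smul_comm c] <;> abel

/-- the Dirac-type operator D = Σ_{j,μ} (σ^j e_j^μ δ_μ + ½ σ^j δ_μ(e_j^μ)),
with δ_μ(e) = [δ_μ, e] -/
def ncDirac (E : Fin 2 → Fin 2 → Module.End ℂ NCV) : Module.End ℂ (NCV × NCV) :=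
  ∑ j : Fin 2, ∑ μ : Fin 2,
    (ncSigma j * ncDiag (E j μ * ncDer μ) +
      (1 / 2 : ℂ) • (ncSigma j * ncDiag (ncDer μ * E j μ - E j μ * ncDer μ)))

/-- ω_i = π(U_i)* [D, π(U_i)] (diagonal action of U_i on spinors);
`U_i* = U_i⁻¹` is the monomial with exponent `-gen i` -/
def ncOmega (θ : ℝ) (E : Fin 2 → Fin 2 → Module.End ℂ NCV) (i : Fin 2) :
    Module.End ℂ (NCV × NCV) :=
  let g : ℤ × ℤ := if i = 0 then (1, 0) else (0, 1)
  ncDiag (wA θ (-g)) *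
    (ncDirac E * ncDiag (wA θ g) - ncDiag (wA θ g) * ncDirac E)

section Aux
variable (θ : ℝ)

lemma ncDiag_mul (S T : Module.End ℂ NCV) : ncDiag (S * T) = ncDiag S * ncDiag T := by
  apply LinearMap.ext; intro x; rfl

lemma ncDiag_sub (S T : Module.End ℂ NCV) : ncDiag (S - T) = ncDiag S - ncDiag T := by
  apply LinearMap.ext; intro x; rfl

lemma ncDiag_smul (c : ℂ) (T : Module.End ℂ NCV) : ncDiag (c • T) = c • ncDiag T := by
  apply LinearMap.ext; intro x; rfl

lemma ncDiag_add (S T : Module.End ℂ NCV) : ncDiag (S + T) = ncDiag S + ncDiag T := by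
  apply LinearMap.ext; intro x; rfl

lemma sigma_diag_comm (j : Fin 2) (T : Module.End ℂ NCV) :
    ncSigma j * ncDiag T = ncDiag T * ncSigma j := by
  apply LinearMap.ext; intro x
  by_cases h : j = 0 <;>
    simp [ncSigma, ncDiag, Module.End.mul_apply, h, map_smul, map_neg]

lemma der_wA (μ : Fin 2) (g : ℤ × ℤ) :
    ncDer μ * wA θ g - wA θ g * ncDer μ =
      (if μ = 0 then (g.1 : ℂ) else (g.2 : ℂ)) • wA θ g := by
  apply LinearMap.ext; intro f; funext q
  by_cases h : μ = 0 <;>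
    · simp [ncDer, wA, LinearMap.sub_apply, Module.End.mul_apply, LinearMap.smul_apply, h,
        smul_eq_mul]
      push_cast
      ring

end Aux
section Aux2
variable (θ : ℝ)

lemma wA_inv (g : ℤ × ℤ) (hg : g.1 * g.2 = 0) : wA θ (-g) * wA θ g = 1 := by
  apply LinearMap.ext; intro f; funext q
  have h2 : ((g.1 : ℂ)) * g.2 = 0 := by exact_mod_cast congrArg (Int.cast : ℤ → ℂ) hg
  simp [wA, Module.End.mul_apply, Module.End.one_apply]
  rw [← mul_assoc, ← Complex.exp_add,
    show -(2 * (Real.pi : ℂ) * I * θ * (q.1 + g.1) * g.2) + 2 * Real.pi * I * θ * q.1 * g.2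
      = -(2 * Real.pi * I * θ * ((g.1 : ℂ) * g.2)) by ring, h2]
  simp

lemma key {A : Type*} [Ring A] [Algebra ℂ A] (S De Dd Dw : A) (c : ℂ)
    (h1 : De * Dw = Dw * De) (h2 : Dd * Dw - Dw * Dd = c • Dw) (h3 : S * Dw = Dw * S) :
    (S * (De * Dd) + (1 / 2 : ℂ) • (S * (Dd * De - De * Dd))) * Dw
      - Dw * (S * (De * Dd) + (1 / 2 : ℂ) • (S * (Dd * De - De * Dd)))
      = c • (S * (Dw * De)) := by
  have h2' : Dd * Dw = Dw * Dd + c • Dw := by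
    rw [← h2]; abel
  have h3' : ∀ x : A, Dw * (S * x) = S * (Dw * x) := fun x => by
    rw [← mul_assoc, ← h3, mul_assoc]
  have hA : De * Dd * Dw = Dw * (De * Dd) + c • (Dw * De) := by
    calc De * Dd * Dw = De * (Dd * Dw) := by rw [mul_assoc]
    _ = De * (Dw * Dd) + c • (De * Dw) := by rw [h2', mul_add, mul_smul_comm]
    _ = Dw * (De * Dd) + c • (Dw * De) := by rw [h1, ← mul_assoc, h1, mul_assoc]
  have hB : (Dd * De - De * Dd) * Dw = Dw * (Dd * De - De * Dd) := by
    have : Dd * De * Dw = Dw * (Dd * De) + c • (Dw * De) := by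
      calc Dd * De * Dw = Dd * (Dw * De) := by rw [mul_assoc, h1]
      _ = (Dw * Dd + c • Dw) * De := by rw [← mul_assoc, h2']
      _ = Dw * (Dd * De) + c • (Dw * De) := by
        rw [add_mul, smul_mul_assoc, mul_assoc]
    rw [sub_mul, mul_sub, this, hA]; abel
  calc (S * (De * Dd) + (1 / 2 : ℂ) • (S * (Dd * De - De * Dd))) * Dw
      - Dw * (S * (De * Dd) + (1 / 2 : ℂ) • (S * (Dd * De - De * Dd)))
      = S * ((De * Dd) * Dw) - S * (Dw * (De * Dd))
        + ((1 / 2 : ℂ) • (S * ((Dd * De - De * Dd) * Dw))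
          - (1 / 2 : ℂ) • (S * (Dw * (Dd * De - De * Dd)))) := by
        simp only [add_mul, mul_add, smul_mul_assoc, mul_smul_comm, mul_assoc, h3']
        abel
    _ = c • (S * (Dw * De)) := by
        rw [hB, hA, mul_add, mul_smul_comm]; abel

end Aux2
section Aux3

lemma ncDiag_one : ncDiag (1 : Module.End ℂ NCV) = 1 := by
  apply LinearMap.ext; intro x; rfl

def ncDiagL : Module.End ℂ NCV →ₗ[ℂ] Module.End ℂ (NCV × NCV) where
  toFun := ncDiag
  map_add' := ncDiag_add
  map_smul' c T := by simp [ncDiag_smul]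

lemma ncDiag_rep (θ : ℝ) (α : (ℤ × ℤ) →₀ ℂ) :
    ncDiag (ncRep θ α) = ∑ p ∈ α.support, α p • ncDiag (wA θ p) := by
  show ncDiagL (ncRep θ α) = _
  rw [ncRep, Finsupp.sum, map_sum]
  exact Finset.sum_congr rfl fun p _ => ncDiagL.map_smul _ _

lemma omega_core (θ : ℝ) (g : ℤ × ℤ) (E : Fin 2 → Fin 2 → Module.End ℂ NCV)
    (hE : ∀ j μ, Commute (E j μ) (wA θ g)) (hg : g.1 * g.2 = 0) :
    ncDiag (wA θ (-g)) * (ncDirac E * ncDiag (wA θ g) - ncDiag (wA θ g) * ncDirac E)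
      = ∑ j : Fin 2, ∑ μ : Fin 2,
          (if μ = 0 then (g.1 : ℂ) else (g.2 : ℂ)) • (ncSigma j * ncDiag (E j μ)) := by
  set W := ncDiag (wA θ g) with hW
  have hWinv : ncDiag (wA θ (-g)) * W = 1 := by
    rw [hW, ← ncDiag_mul, wA_inv θ g hg, ncDiag_one]
  have hterm : ∀ j μ : Fin 2,
      (ncSigma j * ncDiag (E j μ * ncDer μ) +
        (1 / 2 : ℂ) • (ncSigma j * ncDiag (ncDer μ * E j μ - E j μ * ncDer μ))) * W
      - W * (ncSigma j * ncDiag (E j μ * ncDer μ) +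
        (1 / 2 : ℂ) • (ncSigma j * ncDiag (ncDer μ * E j μ - E j μ * ncDer μ)))
      = (if μ = 0 then (g.1 : ℂ) else (g.2 : ℂ)) • (ncSigma j * (W * ncDiag (E j μ))) := by
    intro j μ
    rw [ncDiag_mul (E j μ), ncDiag_sub, ncDiag_mul, ncDiag_mul]
    exact key (ncSigma j) (ncDiag (E j μ)) (ncDiag (ncDer μ)) W _
      (by rw [hW, ← ncDiag_mul, ← ncDiag_mul, (hE j μ).eq])
      (by rw [hW, ← ncDiag_mul, ← ncDiag_mul, ← ncDiag_sub, der_wA, ncDiag_smul])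
      (sigma_diag_comm j _)
  have hbr : ncDirac E * W - W * ncDirac E
      = ∑ j : Fin 2, ∑ μ : Fin 2,
          (if μ = 0 then (g.1 : ℂ) else (g.2 : ℂ)) • (ncSigma j * (W * ncDiag (E j μ))) := by
    rw [ncDirac, Finset.sum_mul, Finset.mul_sum, ← Finset.sum_sub_distrib]
    refine Finset.sum_congr rfl fun j _ => ?_
    rw [Finset.sum_mul, Finset.mul_sum, ← Finset.sum_sub_distrib]
    exact Finset.sum_congr rfl fun μ _ => hterm j μ
  rw [hbr, Finset.mul_sum]
  refine Finset.sum_congr rfl fun j _ => ?_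
  rw [Finset.mul_sum]
  refine Finset.sum_congr rfl fun μ _ => ?_
  rw [mul_smul_comm]
  congr 1
  rw [← mul_assoc, ← sigma_diag_comm, mul_assoc,
    ← mul_assoc (ncDiag (wA θ (-g))) W, hWinv, one_mul]

end Aux3

theorem stmt8 (θ : ℝ) (E : Fin 2 → Fin 2 → Module.End ℂ NCV)
    -- e_j^μ belong to the commutant J A_θ J* of A_θ
    (hE : ∀ j μ p, Commute (E j μ) (wA θ p)) :
    ∀ (i : Fin 2) (α : (ℤ × ℤ) →₀ ℂ),
      Commute (ncDiag (ncRep θ α)) (ncOmega θ E i) := by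
  intro i α
  have hg : ((if i = 0 then ((1 : ℤ), (0 : ℤ)) else (0, 1)) : ℤ × ℤ).1 *
      ((if i = 0 then ((1 : ℤ), (0 : ℤ)) else (0, 1)) : ℤ × ℤ).2 = 0 := by
    fin_cases i <;> simp
  have homega : ncOmega θ E i = ∑ j : Fin 2, ∑ μ : Fin 2,
      (if μ = 0 then (((if i = 0 then ((1 : ℤ), (0 : ℤ)) else (0, 1)) : ℤ × ℤ).1 : ℂ)
        else (((if i = 0 then ((1 : ℤ), (0 : ℤ)) else (0, 1)) : ℤ × ℤ).2 : ℂ)) •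
        (ncSigma j * ncDiag (E j μ)) :=
    omega_core θ _ E (fun j μ => hE j μ _) hg
  rw [homega]
  refine Commute.sum_right _ _ _ fun j _ => ?_
  refine Commute.sum_right _ _ _ fun μ _ => ?_
  refine Commute.smul_right ?_ _
  have hσ : Commute (ncDiag (ncRep θ α)) (ncSigma j) := (sigma_diag_comm j _).symm
  have hD : Commute (ncDiag (ncRep θ α)) (ncDiag (E j μ)) := by
    rw [ncDiag_rep]
    refine Commute.sum_left _ _ _ fun p _ => ?_
    refine Commute.smul_left ?_ _
    show _ = _
    rw [← ncDiag_mul, ← ncDiag_mul, ← (hE j μ p).eq]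
  exact hσ.mul_right hD

end
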